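/- Let k be an algebraically closed field of characteristic 0 or of characteristic p ≥ 7, let V be a finite-dimensional k-vector space, and let ρ : A_5 → GL(V) be a representation. Let g2, g3, g5 ∈ A_5 be elements of orders exactly 2, 3, 5 respectively with g2·g3·g5 = 1. Then dim V^{ρ(g2)} + dim V^{ρ(g3)} + dim V^{ρ(g5)} = dim V + 2·dim V^{A_5}, where V^{ρ(g)} denotes the fixed subspace {v ∈ V : ρ(g)v = v} and V^{A_5} = {v ∈ V : ρ(g)v = v for all g ∈ A_5}. -/

import Mathlib

open Module

namespace SerreA5Aux

section Part1
variable {k : Type*} [Field k] {G : Type*} [Group G]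
variable {V : Type*} [AddCommGroup V] [Module k V]

/-- The subgroup of elements whose image under `ρ` fixes a vector `v`. -/
def vecStab (ρ : Representation k G V) (v : V) : Subgroup G where
  carrier := {g | ρ g v = v}
  one_mem' := by simp
  mul_mem' := by
    intro a b ha hb
    show ρ (a * b) v = v
    rw [map_mul, Module.End.mul_apply, hb, ha]
  inv_mem' := by
    intro a ha
    show ρ a⁻¹ v = v
    conv_lhs => rw [← ha]
    rw [← Module.End.mul_apply, ← map_mul, inv_mul_cancel, map_one, Module.End.one_apply]

@[simp] lemma mem_vecStab {ρ : Representation k G V} {v : V} {g : G} :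
    g ∈ vecStab ρ v ↔ ρ g v = v := Iff.rfl

/-- The subgroup of elements `g` with `φ ∘ ρ g = φ`. -/
def funStab (ρ : Representation k G V) (φ : Module.Dual k V) : Subgroup G where
  carrier := {g | ∀ w, φ (ρ g w) = φ w}
  one_mem' := by simp
  mul_mem' := by
    intro a b ha hb w
    rw [map_mul, Module.End.mul_apply, ha, hb]
  inv_mem' := by
    intro a ha w
    conv_lhs => rw [← ha (ρ a⁻¹ w)]
    rw [← Module.End.mul_apply, ← map_mul, mul_inv_cancel, map_one, Module.End.one_apply]

lemma mem_funStab {ρ : Representation k G V} {φ : Module.Dual k V} {g : G} :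
    g ∈ funStab ρ φ ↔ ∀ w, φ (ρ g w) = φ w := Iff.rfl

lemma mem_ker_sub_id {ρ : Representation k G V} {g : G} {v : V} :
    v ∈ LinearMap.ker (ρ g - LinearMap.id) ↔ ρ g v = v := by
  rw [LinearMap.mem_ker, LinearMap.sub_apply, LinearMap.id_apply, sub_eq_zero]

variable [Fintype G]

/-- The averaging operator. -/
noncomputable def avg (ρ : Representation k G V) : V →ₗ[k] V :=
  (Fintype.card G : k)⁻¹ • ∑ g : G, (ρ g : V →ₗ[k] V)

lemma avg_apply (ρ : Representation k G V) (v : V) :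
    avg ρ v = (Fintype.card G : k)⁻¹ • ∑ g : G, ρ g v := by
  simp [avg, LinearMap.sum_apply]

lemma avg_mem_invariants (ρ : Representation k G V) (v : V) : avg ρ v ∈ ρ.invariants := by
  intro g
  rw [avg_apply, map_smul, map_sum]
  congr 1
  exact Fintype.sum_bijective (fun u => g * u) (Group.mulLeft_bijective g) _ _
    (fun u => by rw [map_mul, Module.End.mul_apply])

lemma avg_apply_of_mem (ρ : Representation k G V) (hc : (Fintype.card G : k) ≠ 0)
    {v : V} (hv : v ∈ ρ.invariants) : avg ρ v = v := by
  rw [avg_apply]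
  have : ∀ g : G, ρ g v = v := hv
  simp only [this, Finset.sum_const, Finset.card_univ]
  rw [← Nat.cast_smul_eq_nsmul k, smul_smul, inv_mul_cancel₀ hc, one_smul]

lemma range_avg (ρ : Representation k G V) (hc : (Fintype.card G : k) ≠ 0) :
    LinearMap.range (avg ρ) = ρ.invariants := by
  apply le_antisymm
  · rintro _ ⟨v, rfl⟩; exact avg_mem_invariants ρ v
  · intro v hv; exact ⟨v, avg_apply_of_mem ρ hc hv⟩

lemma dual_eq_zero_of_mem_ker_avg (ρ : Representation k G V) (hc : (Fintype.card G : k) ≠ 0)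
    (φ : Module.Dual k V) (hφ : ∀ g : G, ∀ w, φ (ρ g w) = φ w)
    {v : V} (hv : v ∈ LinearMap.ker (avg ρ)) : φ v = 0 := by
  have h1 : φ (avg ρ v) = φ v := by
    rw [avg_apply, map_smul, map_sum]
    simp only [hφ]
    rw [Finset.sum_const, Finset.card_univ, smul_eq_mul, ← Nat.cast_smul_eq_nsmul k,
      smul_eq_mul, ← mul_assoc, inv_mul_cancel₀ hc, one_mul]
  rw [LinearMap.mem_ker] at hv
  rw [← h1, hv, map_zero]


end Part1

section Part3
variable {k : Type*} [Field k] {G : Type*} [Group G]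
variable {V : Type*} [AddCommGroup V] [Module k V]
/-- Restriction of a representation to an invariant submodule. -/
def subRep (ρ : Representation k G V) (p : Submodule k V)
    (hp : ∀ g : G, ∀ v ∈ p, ρ g v ∈ p) : Representation k G p where
  toFun g := (ρ g).restrict (hp g)
  map_one' := by
    ext v
    simp [LinearMap.restrict_apply]
  map_mul' g h := by
    ext v
    simp [LinearMap.restrict_apply, Module.End.mul_apply]

@[simp] lemma subRep_apply (ρ : Representation k G V) (p : Submodule k V)
    (hp : ∀ g : G, ∀ v ∈ p, ρ g v ∈ p) (g : G) (v : p) :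
    (subRep ρ p hp g v : V) = ρ g (v : V) := rfl

lemma zero_decomp {p q : Submodule k V} (hdis : Disjoint p q) {a b : V}
    (ha : a ∈ p) (hb : b ∈ q) (hab : a + b = 0) : a = 0 ∧ b = 0 := by
  have h1 : a = -b := eq_neg_of_add_eq_zero_left hab
  have hbp : -b ∈ p := h1 ▸ ha
  have hbq : -b ∈ q := neg_mem hb
  have : -b = 0 := (Submodule.disjoint_def.1 hdis) _ hbp hbq
  constructor
  · rw [h1, this]
  · simpa using this.symm

/-- Key splitting: if both `p` and `q` are invariant under a linear map-stable family and
`W` decomposes accordingly, finranks add. -/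
lemma finrank_inf_add_finrank_inf {p q W : Submodule k V} [FiniteDimensional k V]
    (hdis : Disjoint p q)
    (hdecomp : ∀ v ∈ W, ∃ a ∈ W ⊓ p, ∃ b ∈ W ⊓ q, a + b = v) :
    finrank k (W ⊓ p : Submodule k V) + finrank k (W ⊓ q : Submodule k V) = finrank k W := by
  have hsup : (W ⊓ p) ⊔ (W ⊓ q) = W := by
    apply le_antisymm
    · exact sup_le inf_le_left inf_le_left
    · intro v hv
      obtain ⟨a, ha, b, hb, hab⟩ := hdecomp v hv
      rw [← hab]
      exact Submodule.add_mem_sup ha hb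
  have hinf : (W ⊓ p) ⊓ (W ⊓ q) = ⊥ := by
    apply le_antisymm
    · intro v hv
      exact (Submodule.mem_bot k).2
        ((Submodule.disjoint_def.1 hdis) v hv.1.2 hv.2.2)
    · exact bot_le
  have := Submodule.finrank_sup_add_finrank_inf_eq (W ⊓ p) (W ⊓ q)
  rw [hsup, hinf] at this
  simpa using this.symm

/-- `ker (ρ_p g - id)` matches `ker (ρ g - id) ⊓ p`. -/
lemma finrank_ker_subRep (ρ : Representation k G V) (p : Submodule k V)
    (hp : ∀ g : G, ∀ v ∈ p, ρ g v ∈ p) (g : G) [FiniteDimensional k V] :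
    finrank k (LinearMap.ker (subRep ρ p hp g - LinearMap.id))
      = finrank k ((LinearMap.ker (ρ g - LinearMap.id)) ⊓ p : Submodule k V) := by
  have h : LinearMap.ker (subRep ρ p hp g - LinearMap.id)
      = Submodule.comap p.subtype (LinearMap.ker (ρ g - LinearMap.id) ⊓ p) := by
    ext v
    simp only [LinearMap.mem_ker, Submodule.mem_comap, Submodule.mem_inf,
      Submodule.coe_subtype, LinearMap.sub_apply, LinearMap.id_apply]
    constructor
    · intro hv
      refine ⟨?_, v.2⟩
      have := congrArg Subtype.val hv
      simpa [sub_eq_zero] using Subtype.ext_iff.1 (sub_eq_zero.1 hv) 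
    · intro hv
      have : ρ g (v : V) = (v : V) := sub_eq_zero.1 hv.1
      exact sub_eq_zero.2 (Subtype.ext this)
  rw [h]
  have h2 : Submodule.comap p.subtype (LinearMap.ker (ρ g - LinearMap.id) ⊓ p)
      ≃ₗ[k] (LinearMap.ker (ρ g - LinearMap.id) ⊓ p : Submodule k V) :=
    Submodule.comapSubtypeEquivOfLe inf_le_right
  exact h2.finrank_eq

/-- invariants of a subrepresentation. -/
lemma finrank_invariants_subRep (ρ : Representation k G V) (p : Submodule k V)
    (hp : ∀ g : G, ∀ v ∈ p, ρ g v ∈ p) [FiniteDimensional k V] :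
    finrank k (subRep ρ p hp).invariants
      = finrank k (ρ.invariants ⊓ p : Submodule k V) := by
  have h : (subRep ρ p hp).invariants
      = Submodule.comap p.subtype (ρ.invariants ⊓ p) := by
    ext v
    simp only [Representation.mem_invariants, Submodule.mem_comap, Submodule.mem_inf,
      Submodule.coe_subtype]
    constructor
    · intro hv
      refine ⟨fun g => ?_, v.2⟩
      exact Subtype.ext_iff.1 (hv g)
    · intro hv g
      exact Subtype.ext (hv.1 g)
  rw [h]
  exact (Submodule.comapSubtypeEquivOfLe inf_le_right).finrank_eq


end Part3

section Part2
variable {k : Type*} [Field k] {G : Type*} [Group G]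
variable {V : Type*} [AddCommGroup V] [Module k V]
variable [Fintype G]


variable [Fintype G]

/-- Scott's inequality for a triple with product one generating the group. -/
theorem scott (ρ : Representation k G V) [FiniteDimensional k V]
    (hc : (Fintype.card G : k) ≠ 0) (x y z : G) (hxyz : x * y * z = 1)
    (hgen : Subgroup.closure ({x, y} : Set G) = ⊤) :
    finrank k (LinearMap.ker (ρ x - LinearMap.id)) + finrank k (LinearMap.ker (ρ y - LinearMap.id))
      + finrank k (LinearMap.ker (ρ z - LinearMap.id))
      ≤ finrank k V + 2 * finrank k ρ.invariants := by
  classical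
  set Ex : V →ₗ[k] V := ρ x - LinearMap.id with hEx
  set Ey : V →ₗ[k] V := ρ y - LinearMap.id with hEy
  set Ez : V →ₗ[k] V := ρ z - LinearMap.id with hEz
  have hExa : ∀ v, Ex v = ρ x v - v := fun v => rfl
  have hEya : ∀ v, Ey v = ρ y v - v := fun v => rfl
  have hEza : ∀ v, Ez v = ρ z v - v := fun v => rfl
  -- the map ψ from the product of the ranges to V
  let W := ↥(LinearMap.range Ex) × ↥(LinearMap.range Ey) × ↥(LinearMap.range Ez)
  let ψ : W →ₗ[k] V :=
    ((LinearMap.range Ex).subtype).comp (LinearMap.fst k _ _)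
      + ((ρ x).comp ((LinearMap.range Ey).subtype)).comp
          ((LinearMap.fst k _ _).comp (LinearMap.snd k _ _))
      + (((ρ x) ∘ₗ (ρ y)).comp ((LinearMap.range Ez).subtype)).comp
          ((LinearMap.snd k _ _).comp (LinearMap.snd k _ _))
  have hψa : ∀ (u : ↥(LinearMap.range Ex)) (v : ↥(LinearMap.range Ey))
      (w : ↥(LinearMap.range Ez)), ψ (u, v, w) = ↑u + ρ x ↑v + ρ x (ρ y ↑w) := fun u v w => rfl
  -- the map f' from V into W
  let f' : V →ₗ[k] W :=
    (Ex.codRestrict (LinearMap.range Ex) (fun v => LinearMap.mem_range_self _ v)).prod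
      ((Ey.codRestrict (LinearMap.range Ey) (fun v => LinearMap.mem_range_self _ v)).prod
        (Ez.codRestrict (LinearMap.range Ez) (fun v => LinearMap.mem_range_self _ v)))
  have hρ3 : ∀ v, ρ x (ρ y (ρ z v)) = v := by
    intro v
    rw [← Module.End.mul_apply, ← map_mul, ← Module.End.mul_apply, ← map_mul, hxyz, map_one, Module.End.one_apply]
  have hψf : ∀ v, ψ (f' v) = 0 := by
    intro v
    show Ex v + ρ x (Ey v) + ρ x (ρ y (Ez v)) = 0
    rw [hExa, hEya, hEza, map_sub, map_sub, map_sub, hρ3]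
    abel
  have hkerf : LinearMap.ker f' = ρ.invariants := by
    ext v
    rw [LinearMap.mem_ker, Representation.mem_invariants]
    constructor
    · intro hv
      have h : (f' v).1 = 0 ∧ (f' v).2.1 = 0 ∧ (f' v).2.2 = 0 := by
        rw [hv]; exact ⟨rfl, rfl, rfl⟩
      have hxv : ρ x v = v := by
        have h1 : Ex v = 0 := by
          have := congrArg Subtype.val h.1
          rwa [ZeroMemClass.coe_zero] at this
        rw [hExa] at h1; exact sub_eq_zero.1 h1
      have hyv : ρ y v = v := by
        have h1 : Ey v = 0 := by
          have := congrArg Subtype.val h.2.1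
          rwa [ZeroMemClass.coe_zero] at this
        rw [hEya] at h1; exact sub_eq_zero.1 h1
      have hle : Subgroup.closure ({x, y} : Set G) ≤ vecStab ρ v := by
        rw [Subgroup.closure_le]
        rintro g (rfl | rfl)
        · exact mem_vecStab.2 hxv
        · exact mem_vecStab.2 hyv
      rw [hgen] at hle
      exact fun g => mem_vecStab.1 (hle (Subgroup.mem_top g))
    · intro hv
      have e1 : Ex v = 0 := by rw [hExa, hv x, sub_self]
      have e2 : Ey v = 0 := by rw [hEya, hv y, sub_self]
      have e3 : Ez v = 0 := by rw [hEza, hv z, sub_self]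
      exact Prod.ext (Subtype.ext e1) (Prod.ext (Subtype.ext e2) (Subtype.ext e3))
  -- range f' sits inside ker ψ
  have hrange_le : LinearMap.range f' ≤ LinearMap.ker ψ := by
    rintro _ ⟨v, rfl⟩
    exact LinearMap.mem_ker.2 (hψf v)
  -- the annihilator comparison
  have hann : (LinearMap.range ψ).dualAnnihilator ≤ (LinearMap.ker (avg ρ)).dualAnnihilator := by
    intro φ hφ
    rw [Submodule.mem_dualAnnihilator] at hφ ⊢
    have hxφ : ∀ v, φ (ρ x v) = φ v := by
      intro v
      have hmem : Ex v ∈ LinearMap.range ψ := by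
        refine ⟨(⟨Ex v, LinearMap.mem_range_self _ v⟩, 0, 0), ?_⟩
        rw [hψa]
        simp
      have := hφ _ hmem
      rw [hExa, map_sub, sub_eq_zero] at this
      exact this
    have hxyφ : ∀ v, φ (ρ x (ρ y v)) = φ (ρ x v) := by
      intro v
      have hmem : ρ x (Ey v) ∈ LinearMap.range ψ := by
        refine ⟨(0, ⟨Ey v, LinearMap.mem_range_self _ v⟩, 0), ?_⟩
        rw [hψa]
        simp
      have := hφ _ hmem
      rw [hEya, map_sub, map_sub, sub_eq_zero] at this
      exact this
    have hyφ : ∀ v, φ (ρ y v) = φ v := fun v => by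
      rw [← hxφ (ρ y v), hxyφ v, hxφ v]
    have hall : ∀ g : G, ∀ w, φ (ρ g w) = φ w := by
      have hle : Subgroup.closure ({x, y} : Set G) ≤ funStab ρ φ := by
        rw [Subgroup.closure_le]
        rintro g (rfl | rfl)
        · exact mem_funStab.2 hxφ
        · exact mem_funStab.2 hyφ
      rw [hgen] at hle
      exact fun g => mem_funStab.1 (hle (Subgroup.mem_top g))
    intro w hw
    exact dual_eq_zero_of_mem_ker_avg ρ hc φ hall hw
  -- annihilator dimension formula
  have fr_ann : ∀ (U : Submodule k V),
      finrank k U + finrank k U.dualAnnihilator = finrank k V := by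
    intro U
    have h1 := LinearEquiv.finrank_eq (R := k) (M := V ⧸ U) (N := U.dualAnnihilator)
      (Subspace.quotEquivAnnihilator U)
    have h2 := Submodule.finrank_quotient_add_finrank U
    omega
  -- collect all the numerical identities
  have e1 : finrank k (LinearMap.range Ex) + finrank k (LinearMap.ker Ex) = finrank k V :=
    LinearMap.finrank_range_add_finrank_ker Ex
  have e2 : finrank k (LinearMap.range Ey) + finrank k (LinearMap.ker Ey) = finrank k V :=
    LinearMap.finrank_range_add_finrank_ker Ey
  have e3 : finrank k (LinearMap.range Ez) + finrank k (LinearMap.ker Ez) = finrank k V :=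
    LinearMap.finrank_range_add_finrank_ker Ez
  have e4 : finrank k (LinearMap.range ψ) + finrank k (LinearMap.ker ψ) = finrank k W :=
    LinearMap.finrank_range_add_finrank_ker ψ
  have eW : finrank k W = finrank k (LinearMap.range Ex)
      + (finrank k (LinearMap.range Ey) + finrank k (LinearMap.range Ez)) := by
    rw [Module.finrank_prod, Module.finrank_prod]
  have e5 : finrank k (LinearMap.range f') + finrank k ρ.invariants = finrank k V := by
    rw [← hkerf]
    exact LinearMap.finrank_range_add_finrank_ker f'
  have e6 : finrank k (LinearMap.range f') ≤ finrank k (LinearMap.ker ψ) :=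
    Submodule.finrank_mono hrange_le
  have e7 := fr_ann (LinearMap.range ψ)
  have e8 := fr_ann (LinearMap.ker (avg ρ))
  have e9 : finrank k (LinearMap.range ψ).dualAnnihilator
      ≤ finrank k (LinearMap.ker (avg ρ)).dualAnnihilator :=
    Submodule.finrank_mono hann
  have e10 : finrank k (LinearMap.range (avg ρ)) + finrank k (LinearMap.ker (avg ρ))
      = finrank k V := LinearMap.finrank_range_add_finrank_ker (avg ρ)
  have e11 : finrank k (LinearMap.range (avg ρ)) = finrank k ρ.invariants := by
    rw [range_avg ρ hc]
  omega


end Part2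

section Part4
variable {k : Type*} [Field k] {G : Type*} [Group G]
variable {V : Type*} [AddCommGroup V] [Module k V]


/-- decomposition of the fixed space of `ρ g` along a stable complement pair. -/
lemma ker_decomp (ρ : Representation k G V) [FiniteDimensional k V]
    {p q : Submodule k V} (hpq : IsCompl p q)
    (hp : ∀ g : G, ∀ v ∈ p, ρ g v ∈ p) (hq : ∀ g : G, ∀ v ∈ q, ρ g v ∈ q) (g : G) :
    finrank k ((LinearMap.ker (ρ g - LinearMap.id)) ⊓ p : Submodule k V)
      + finrank k ((LinearMap.ker (ρ g - LinearMap.id)) ⊓ q : Submodule k V)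
      = finrank k (LinearMap.ker (ρ g - LinearMap.id)) := by
  apply finrank_inf_add_finrank_inf hpq.disjoint
  intro v hv
  have hv' : ρ g v = v := by
    have := LinearMap.mem_ker.1 hv
    rw [LinearMap.sub_apply, LinearMap.id_apply, sub_eq_zero] at this
    exact this
  obtain ⟨a, ha, b, hb, hab⟩ := Submodule.mem_sup.1
    (by rw [hpq.sup_eq_top]; exact Submodule.mem_top : v ∈ p ⊔ q)
  have hza : ρ g a - a ∈ p := sub_mem (hp g a ha) ha
  have hzb : ρ g b - b ∈ q := sub_mem (hq g b hb) hb
  have hsum : (ρ g a - a) + (ρ g b - b) = 0 := by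
    have : ρ g a + ρ g b = a + b := by
      rw [← map_add, hab, hv']
    rw [sub_add_sub_comm, this, sub_self]
  obtain ⟨h1, h2⟩ := zero_decomp hpq.disjoint hza hzb hsum
  have hka : a ∈ LinearMap.ker (ρ g - LinearMap.id) := by
    rw [LinearMap.mem_ker, LinearMap.sub_apply, LinearMap.id_apply]
    exact h1
  have hkb : b ∈ LinearMap.ker (ρ g - LinearMap.id) := by
    rw [LinearMap.mem_ker, LinearMap.sub_apply, LinearMap.id_apply]
    exact h2
  exact ⟨a, ⟨hka, ha⟩, b, ⟨hkb, hb⟩, hab⟩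

/-- decomposition of the invariants along a stable complement pair. -/
lemma invariants_decomp (ρ : Representation k G V) [FiniteDimensional k V]
    {p q : Submodule k V} (hpq : IsCompl p q)
    (hp : ∀ g : G, ∀ v ∈ p, ρ g v ∈ p) (hq : ∀ g : G, ∀ v ∈ q, ρ g v ∈ q) :
    finrank k (ρ.invariants ⊓ p : Submodule k V)
      + finrank k (ρ.invariants ⊓ q : Submodule k V)
      = finrank k ρ.invariants := by
  apply finrank_inf_add_finrank_inf hpq.disjoint
  intro v hv
  have hv' : ∀ g : G, ρ g v = v := hv
  obtain ⟨a, ha, b, hb, hab⟩ := Submodule.mem_sup.1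
    (by rw [hpq.sup_eq_top]; exact Submodule.mem_top : v ∈ p ⊔ q)
  have hfix : ∀ g : G, ρ g a = a ∧ ρ g b = b := by
    intro g
    have hza : ρ g a - a ∈ p := sub_mem (hp g a ha) ha
    have hzb : ρ g b - b ∈ q := sub_mem (hq g b hb) hb
    have hsum : (ρ g a - a) + (ρ g b - b) = 0 := by
      have : ρ g a + ρ g b = a + b := by
        rw [← map_add, hab, hv' g]
      rw [sub_add_sub_comm, this, sub_self]
    obtain ⟨h1, h2⟩ := zero_decomp hpq.disjoint hza hzb hsum
    exact ⟨sub_eq_zero.1 h1, sub_eq_zero.1 h2⟩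
  have hainv : a ∈ ρ.invariants := fun g => (hfix g).1
  have hbinv : b ∈ ρ.invariants := fun g => (hfix g).2
  exact ⟨a, ⟨hainv, ha⟩, b, ⟨hbinv, hb⟩, hab⟩

variable [Fintype G]

/-- Maschke: a stable submodule has a stable complement. -/
lemma exists_stable_compl (ρ : Representation k G V) [FiniteDimensional k V]
    (hc : (Fintype.card G : k) ≠ 0) (p : Submodule k V)
    (hp : ∀ g : G, ∀ v ∈ p, ρ g v ∈ p) :
    ∃ q : Submodule k V, IsCompl p q ∧ ∀ g : G, ∀ v ∈ q, ρ g v ∈ q := by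
  classical
  obtain ⟨q₀, hq₀⟩ := Submodule.exists_isCompl p
  set π₀ : V →ₗ[k] V := p.subtype ∘ₗ p.projectionOnto q₀ hq₀ with hπ₀
  have hπ₀p : ∀ v ∈ p, π₀ v = v := by
    intro v hv
    show (p.projectionOnto q₀ hq₀ v : V) = v
    rw [show v = ((⟨v, hv⟩ : p) : V) from rfl, Submodule.projectionOnto_apply_left hq₀]
  have hπ₀mem : ∀ v, π₀ v ∈ p := fun v => (p.projectionOnto q₀ hq₀ v).2
  set T : V →ₗ[k] V :=
    (Fintype.card G : k)⁻¹ • ∑ g : G, (ρ g) ∘ₗ π₀ ∘ₗ (ρ g⁻¹) with hT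
  have hTapply : ∀ v, T v = (Fintype.card G : k)⁻¹ • ∑ g : G, ρ g (π₀ (ρ g⁻¹ v)) := by
    intro v
    simp [hT, LinearMap.sum_apply]
  have hTmem : ∀ v, T v ∈ p := by
    intro v
    rw [hTapply]
    exact Submodule.smul_mem _ _ (Submodule.sum_mem _ fun g _ => hp g _ (hπ₀mem _))
  have hTid : ∀ v ∈ p, T v = v := by
    intro v hv
    rw [hTapply]
    have : ∀ g : G, ρ g (π₀ (ρ g⁻¹ v)) = v := by
      intro g
      rw [hπ₀p _ (hp g⁻¹ v hv), ← Module.End.mul_apply, ← map_mul, mul_inv_cancel, map_one,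
        Module.End.one_apply]
    simp only [this, Finset.sum_const, Finset.card_univ]
    rw [← Nat.cast_smul_eq_nsmul k, smul_smul, inv_mul_cancel₀ hc, one_smul]
  have hTequiv : ∀ h : G, ∀ v, T (ρ h v) = ρ h (T v) := by
    intro h v
    rw [hTapply, hTapply, map_smul, map_sum]
    congr 1
    refine (Fintype.sum_bijective (fun u => h * u) (Group.mulLeft_bijective h) _ _
      fun u => ?_).symm
    have h1 : ρ (h * u)⁻¹ (ρ h v) = ρ u⁻¹ v := by
      rw [← Module.End.mul_apply, ← map_mul]
      congr 1
      group
    rw [h1, map_mul, Module.End.mul_apply]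
  refine ⟨LinearMap.ker T, ⟨?_, ?_⟩, ?_⟩
  · -- disjoint
    rw [Submodule.disjoint_def]
    intro v hvp hvk
    rw [← hTid v hvp]
    exact LinearMap.mem_ker.1 hvk
  · -- codisjoint
    rw [codisjoint_iff, Submodule.eq_top_iff']
    intro v
    have h1 : T v ∈ p := hTmem v
    have h2 : v - T v ∈ LinearMap.ker T := by
      rw [LinearMap.mem_ker, map_sub, hTid _ (hTmem v), sub_self]
    have : v = T v + (v - T v) := by abel
    rw [this]
    exact Submodule.add_mem_sup h1 h2
  · -- stability
    intro g v hv
    rw [LinearMap.mem_ker] at hv ⊢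
    rw [hTequiv, hv, map_zero]

/-- transfer of quantities along an equivariant linear equivalence. -/
lemma finrank_ker_congr {V₂ : Type*} [AddCommGroup V₂] [Module k V₂]
    (ρ₁ : Representation k G V) (ρ₂ : Representation k G V₂) (e : V ≃ₗ[k] V₂)
    (he : ∀ g v, e (ρ₁ g v) = ρ₂ g (e v)) (g : G) :
    finrank k (LinearMap.ker (ρ₁ g - LinearMap.id))
      = finrank k (LinearMap.ker (ρ₂ g - LinearMap.id)) := by
  have h : LinearMap.ker (ρ₂ g - LinearMap.id)
      = Submodule.map (e : V →ₗ[k] V₂) (LinearMap.ker (ρ₁ g - LinearMap.id)) := by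
    ext w
    simp only [LinearMap.mem_ker, Submodule.mem_map, LinearMap.sub_apply, LinearMap.id_apply]
    constructor
    · intro hw
      refine ⟨e.symm w, ?_, by simp⟩
      rw [sub_eq_zero] at hw ⊢
      apply e.injective
      rw [he, e.apply_symm_apply, hw]
    · rintro ⟨v, hv, rfl⟩
      rw [sub_eq_zero] at hv ⊢
      show (ρ₂ g) (e v) = e v
      rw [← he, hv]
  rw [h, LinearEquiv.finrank_map_eq]

lemma finrank_invariants_congr {V₂ : Type*} [AddCommGroup V₂] [Module k V₂]
    (ρ₁ : Representation k G V) (ρ₂ : Representation k G V₂) (e : V ≃ₗ[k] V₂)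
    (he : ∀ g v, e (ρ₁ g v) = ρ₂ g (e v)) :
    finrank k ρ₁.invariants = finrank k ρ₂.invariants := by
  have h : ρ₂.invariants = Submodule.map (e : V →ₗ[k] V₂) ρ₁.invariants := by
    ext w
    simp only [Representation.mem_invariants, Submodule.mem_map]
    constructor
    · intro hw
      refine ⟨e.symm w, fun g => ?_, by simp⟩
      apply e.injective
      rw [he, e.apply_symm_apply, hw g]
    · rintro ⟨v, hv, rfl⟩
      intro g
      show (ρ₂ g) (e v) = e v
      rw [← he, hv g]
  rw [h, LinearEquiv.finrank_map_eq]


end Part4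

section Part5
variable {k : Type*} [Field k] {G : Type*} [Group G]
section perm

variable (k G)

/-- The permutation representation on functions `G → k` induced by left multiplication. -/
def permRep : Representation k G (G → k) where
  toFun g := LinearMap.funLeft k k (fun x => g⁻¹ * x)
  map_one' := by
    ext f x
    simp [LinearMap.funLeft_apply]
  map_mul' g h := by
    ext f x
    simp [LinearMap.funLeft_apply, Module.End.mul_apply, mul_assoc]

lemma permRep_apply (g : G) (f : G → k) (x : G) : permRep k G g f x = f (g⁻¹ * x) := rfl

variable {k G}

/-- The subgroup of `G` fixing a given function under the permRep-type condition. -/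
def fixer (f : G → k) : Subgroup G where
  carrier := {g | ∀ x, f (g * x) = f x}
  one_mem' := by simp
  mul_mem' := by
    intro a b ha hb x
    rw [mul_assoc, ha, hb]
  inv_mem' := by
    intro a ha x
    have := ha (a⁻¹ * x)
    rw [mul_inv_cancel_left] at this
    exact this.symm

lemma mem_fixer {f : G → k} {g : G} : g ∈ fixer f ↔ ∀ x, f (g * x) = f x := Iff.rfl

variable [Fintype G]

/-- fixed functions of a subgroup `H` (under left translation), as a submodule. -/
def fixedFuns (H : Subgroup G) : Submodule k (G → k) where
  carrier := {f | ∀ h ∈ H, ∀ x, f (h * x) = f x}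
  zero_mem' := by intro h _ x; rfl
  add_mem' := by intro f1 f2 h1 h2 h hH x; simp [h1 h hH x, h2 h hH x]
  smul_mem' := by intro c f hf h hH x; simp [hf h hH x]

lemma mem_fixedFuns {H : Subgroup G} {f : G → k} :
    f ∈ (fixedFuns H : Submodule k (G → k)) ↔ ∀ h ∈ H, ∀ x, f (h * x) = f x := Iff.rfl

/-- dimension of the fixed functions: the number of orbits, i.e. cosets. -/
lemma finrank_fixedFuns (H : Subgroup G) :
    finrank k (fixedFuns H : Submodule k (G → k))
      = Nat.card (MulAction.orbitRel.Quotient H G) := by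
  classical
  set Q := MulAction.orbitRel.Quotient H G
  letI : Fintype Q := Fintype.ofFinite Q
  -- the linear map from functions on the quotient
  set L : (Q → k) →ₗ[k] (G → k) := LinearMap.funLeft k k (Quotient.mk'') with hL
  have hLinj : Function.Injective L :=
    LinearMap.funLeft_injective_of_surjective k k _ Quotient.mk''_surjective
  have hLrange : LinearMap.range L = fixedFuns H := by
    apply le_antisymm
    · rintro _ ⟨c, rfl⟩
      intro h hH x
      show c (Quotient.mk'' (h * x)) = c (Quotient.mk'' x)
      congr 1
      apply Quotient.sound'
      rw [MulAction.orbitRel_apply]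
      exact ⟨⟨h, hH⟩, rfl⟩
    · intro f hf
      have hresp : ∀ a b : G, MulAction.orbitRel (↥H) G a b → f a = f b := by
        intro a b hab
        rw [MulAction.orbitRel_apply] at hab
        obtain ⟨⟨h, hH⟩, rfl⟩ := hab
        exact hf h hH b
      refine ⟨Quotient.lift f hresp, ?_⟩
      ext x
      rfl
  have h1 : finrank k (fixedFuns H : Submodule k (G → k)) = finrank k (Q → k) := by
    rw [← hLrange]
    exact LinearMap.finrank_range_of_inj hLinj
  rw [h1, Module.finrank_pi, Nat.card_eq_fintype_card]

/-- orbit counting for a free action. -/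
lemma card_quotient_mul_card_eq (H : Subgroup G)
    (hfree : ∀ (h : H) (x : G), h • x = x → h = 1) :
    Nat.card (MulAction.orbitRel.Quotient H G) * Nat.card H = Nat.card G := by
  classical
  set Q := MulAction.orbitRel.Quotient H G
  letI : Fintype Q := Fintype.ofFinite Q
  have he := MulAction.selfEquivSigmaOrbits H G
  have hcard := Nat.card_congr he
  have horb : ∀ ω : Q, Nat.card (MulAction.orbit H (Quotient.out ω)) = Nat.card H := by
    intro ω
    have e1 := MulAction.orbitEquivQuotientStabilizer H (Quotient.out ω)
    have hstab : MulAction.stabilizer H (Quotient.out ω) = ⊥ := by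
      apply le_antisymm
      · intro h hh
        exact hfree h _ hh
      · exact bot_le
    rw [Nat.card_congr e1, hstab]
    rw [Nat.card_congr (QuotientGroup.quotientBot (G := H)).toEquiv]
  letI : ∀ ω : Q, Fintype (MulAction.orbit (↥H) (Quotient.out ω)) :=
    fun ω => Fintype.ofFinite _
  have hcard2 : Fintype.card G = ∑ ω : Q, Fintype.card (MulAction.orbit (↥H) (Quotient.out ω)) := by
    rw [← Fintype.card_sigma]
    exact Fintype.card_congr he
  have horb2 : ∀ ω : Q, Fintype.card (MulAction.orbit (↥H) (Quotient.out ω)) = Nat.card (↥H) := by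
    intro ω
    rw [← Nat.card_eq_fintype_card]
    exact horb ω
  rw [Nat.card_eq_fintype_card (α := G), hcard2]
  simp only [horb2]
  rw [Finset.sum_const, Finset.card_univ, smul_eq_mul, Nat.card_eq_fintype_card (α := Q)]

end perm

end Part5

section Part6
variable {k : Type*} [Field k] {G : Type*} [Group G]
variable [Fintype G]


variable [Fintype G]

lemma ker_permRep_eq (g : G) :
    LinearMap.ker (permRep k G g - LinearMap.id) = (fixedFuns (Subgroup.zpowers g) : Submodule k (G → k)) := by
  ext f
  rw [LinearMap.mem_ker, mem_fixedFuns]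
  constructor
  · intro hf
    rw [LinearMap.sub_apply, LinearMap.id_apply, sub_eq_zero] at hf
    have hf' : ∀ x, f (g⁻¹ * x) = f x := by
      intro x
      have := congrFun hf x
      rw [permRep_apply] at this
      exact this
    have hg : g ∈ fixer f := by
      rw [mem_fixer]
      intro x
      have := hf' (g * x)
      rw [inv_mul_cancel_left] at this
      exact this.symm
    have hle : Subgroup.zpowers g ≤ fixer f := (Subgroup.zpowers_le).2 hg
    intro h hH x
    exact mem_fixer.1 (hle hH) x
  · intro hf
    rw [LinearMap.sub_apply, LinearMap.id_apply, sub_eq_zero]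
    ext x
    rw [permRep_apply]
    exact hf g⁻¹ (inv_mem (Subgroup.mem_zpowers g)) x
lemma invariants_permRep :
    (permRep k G).invariants = (fixedFuns (⊤ : Subgroup G) : Submodule k (G → k)) := by
  ext f
  rw [Representation.mem_invariants, mem_fixedFuns]
  constructor
  · intro hf h _ x
    have := congrFun (hf h⁻¹) x
    rw [permRep_apply, inv_inv] at this
    exact this
  · intro hf g
    ext x
    rw [permRep_apply]
    exact hf g⁻¹ trivial x

lemma card_quotient_top : Nat.card (MulAction.orbitRel.Quotient (⊤ : Subgroup G) G) = 1 := by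
  rw [Nat.card_eq_one_iff_unique]
  constructor
  · constructor
    intro a b
    obtain ⟨a', rfl⟩ := Quotient.mk''_surjective (α := G) a
    obtain ⟨b', rfl⟩ := Quotient.mk''_surjective (α := G) b
    apply Quotient.sound'
    rw [MulAction.orbitRel_apply]
    refine ⟨⟨a' * b'⁻¹, trivial⟩, ?_⟩
    show (a' * b'⁻¹) * b' = a'
    rw [inv_mul_cancel_right]
  · exact ⟨Quotient.mk'' 1⟩

lemma zpowers_free (g : G) : ∀ (h : Subgroup.zpowers g) (x : G), h • x = x → h = 1 := by
  intro h x hx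
  have : (h : G) * x = x := hx
  have h1 : (h : G) = 1 :=
    mul_right_cancel (show (h : G) * x = 1 * x by rw [this, one_mul])
  exact Subtype.ext h1

lemma finrank_ker_permRep_mul (g : G) :
    finrank k (LinearMap.ker (permRep k G g - LinearMap.id)) * orderOf g = Fintype.card G := by
  rw [ker_permRep_eq, finrank_fixedFuns, ← Nat.card_zpowers, ← Nat.card_eq_fintype_card]
  exact card_quotient_mul_card_eq _ (zpowers_free g)

lemma finrank_invariants_permRep : finrank k (permRep k G).invariants = 1 := by
  rw [invariants_permRep, finrank_fixedFuns, card_quotient_top]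

lemma finrank_permRep_space : finrank k (G → k) = Fintype.card G := Module.finrank_pi k


end Part6

section Part7
variable {k : Type*} [Field k] {G : Type*} [Group G] [Fintype G]

theorem master_aux
    (hck : (Fintype.card G : k) ≠ 0) (hG : Fintype.card G = 60)
    (x y z : G) (hx : orderOf x = 2) (hy : orderOf y = 3) (hz : orderOf z = 5)
    (hxyz : x * y * z = 1) (hgen : Subgroup.closure ({x, y} : Set G) = ⊤) :
    ∀ (n : ℕ) (V : Type*) [AddCommGroup V] [Module k V] [FiniteDimensional k V]
      (ρ : Representation k G V), finrank k V = n →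
      finrank k (LinearMap.ker (ρ x - LinearMap.id))
        + finrank k (LinearMap.ker (ρ y - LinearMap.id))
        + finrank k (LinearMap.ker (ρ z - LinearMap.id))
        = finrank k V + 2 * finrank k ρ.invariants := by
  intro n
  induction n using Nat.strong_induction_on with
  | _ n ih =>
    intro V _ _ _ ρ hn
    classical
    by_cases h0 : finrank k V = 0
    · have hall : ∀ p : Submodule k V, finrank k p = 0 := by
        intro p
        have h1 : finrank k p ≤ finrank k V := p.finrank_le
        omega
      simp only [hall, h0]
    · have hnt : Nontrivial V := by
        apply Module.nontrivial_of_finrank_pos (R := k)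
        omega
      obtain ⟨v, hv⟩ := exists_ne (0 : V)
      -- equivariant surjection from the regular representation onto the orbit span
      set φ : (G → k) →ₗ[k] V := ∑ h : G, (LinearMap.proj h).smulRight (ρ h v) with hφ
      have hφ_apply : ∀ f, φ f = ∑ h : G, f h • ρ h v := by
        intro f
        simp [hφ, LinearMap.sum_apply]
      have hφ_equiv : ∀ g f, φ (permRep k G g f) = ρ g (φ f) := by
        intro g f
        rw [hφ_apply, hφ_apply, map_sum]
        refine (Fintype.sum_bijective (fun u => g * u) (Group.mulLeft_bijective g) _ _
          fun u => ?_).symm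
        rw [map_smul, permRep_apply, inv_mul_cancel_left, map_mul, Module.End.mul_apply]
      have hvmem : v ∈ LinearMap.range φ := by
        refine ⟨Pi.single 1 1, ?_⟩
        rw [hφ_apply]
        rw [Finset.sum_eq_single 1]
        · simp
        · intro h _ hh
          rw [Pi.single_eq_of_ne hh, zero_smul]
        · intro h
          exact absurd (Finset.mem_univ 1) h
      set p := LinearMap.range φ with hp
      have hpstab : ∀ g : G, ∀ w ∈ p, ρ g w ∈ p := by
        rintro g w ⟨f, rfl⟩
        exact ⟨permRep k G g f, hφ_equiv g f⟩
      obtain ⟨q, hpq, hqstab⟩ := exists_stable_compl ρ hck p hpstab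
      have hkstab : ∀ g : G, ∀ f ∈ LinearMap.ker φ, permRep k G g f ∈ LinearMap.ker φ := by
        intro g f hf
        rw [LinearMap.mem_ker] at hf ⊢
        rw [hφ_equiv, hf, map_zero]
      obtain ⟨C, hkC, hCstab⟩ := exists_stable_compl (permRep k G) hck (LinearMap.ker φ) hkstab
      -- the equivalence from C to p
      have hmemp : ∀ c : C, φ (c : G → k) ∈ p := fun c => ⟨c, rfl⟩
      set ψC : C →ₗ[k] p := (φ.comp C.subtype).codRestrict p (fun c => hmemp c) with hψC
      have hψC_bij : Function.Bijective ψC := by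
        constructor
        · intro c c' hcc
          have h1 : φ (c : G → k) = φ (c' : G → k) := congrArg Subtype.val hcc
          have h2 : ((c : G → k) - (c' : G → k)) ∈ LinearMap.ker φ := by
            rw [LinearMap.mem_ker, map_sub, h1, sub_self]
          have h3 : ((c : G → k) - (c' : G → k)) ∈ C := sub_mem c.2 c'.2
          have h4 : ((c : G → k) - (c' : G → k)) = 0 :=
            Submodule.disjoint_def.1 hkC.disjoint _ h2 h3
          exact Subtype.ext (sub_eq_zero.1 h4)
        · intro w
          obtain ⟨f, hf⟩ := w.2
          obtain ⟨f₁, hf₁, f₂, hf₂, hf12⟩ := Submodule.mem_sup.1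
            (by rw [hkC.sup_eq_top]; exact Submodule.mem_top : f ∈ LinearMap.ker φ ⊔ C)
          refine ⟨⟨f₂, hf₂⟩, ?_⟩
          apply Subtype.ext
          show φ f₂ = (w : V)
          rw [← hf, ← hf12, map_add, LinearMap.mem_ker.1 hf₁, zero_add]
      set e : C ≃ₗ[k] p := LinearEquiv.ofBijective ψC hψC_bij with he_def
      have he : ∀ (g : G) (c : C),
          e (subRep (permRep k G) C hCstab g c) = subRep ρ p hpstab g (e c) := by
        intro g c
        apply Subtype.ext
        show φ (permRep k G g (c : G → k)) = ρ g (φ (c : G → k))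
        exact hφ_equiv g (c : G → k)
      -- numeric identities for V
      have hAx : finrank k (LinearMap.ker (subRep ρ p hpstab x - LinearMap.id))
            + finrank k (LinearMap.ker (subRep ρ q hqstab x - LinearMap.id))
          = finrank k (LinearMap.ker (ρ x - LinearMap.id)) := by
        rw [finrank_ker_subRep, finrank_ker_subRep]
        exact ker_decomp ρ hpq hpstab hqstab x
      have hAy : finrank k (LinearMap.ker (subRep ρ p hpstab y - LinearMap.id))
            + finrank k (LinearMap.ker (subRep ρ q hqstab y - LinearMap.id))
          = finrank k (LinearMap.ker (ρ y - LinearMap.id)) := by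
        rw [finrank_ker_subRep, finrank_ker_subRep]
        exact ker_decomp ρ hpq hpstab hqstab y
      have hAz : finrank k (LinearMap.ker (subRep ρ p hpstab z - LinearMap.id))
            + finrank k (LinearMap.ker (subRep ρ q hqstab z - LinearMap.id))
          = finrank k (LinearMap.ker (ρ z - LinearMap.id)) := by
        rw [finrank_ker_subRep, finrank_ker_subRep]
        exact ker_decomp ρ hpq hpstab hqstab z
      have hT : finrank k (subRep ρ p hpstab).invariants
            + finrank k (subRep ρ q hqstab).invariants = finrank k ρ.invariants := by
        rw [finrank_invariants_subRep, finrank_invariants_subRep]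
        exact invariants_decomp ρ hpq hpstab hqstab
      have hdim : finrank k p + finrank k q = finrank k V :=
        Submodule.finrank_add_eq_of_isCompl hpq
      -- numeric identities for the regular representation
      have hBx : finrank k (LinearMap.ker (subRep (permRep k G) (LinearMap.ker φ) hkstab x
              - LinearMap.id))
            + finrank k (LinearMap.ker (subRep (permRep k G) C hCstab x - LinearMap.id))
          = finrank k (LinearMap.ker (permRep k G x - LinearMap.id)) := by
        rw [finrank_ker_subRep, finrank_ker_subRep]
        exact ker_decomp (permRep k G) hkC hkstab hCstab x
      have hBy : finrank k (LinearMap.ker (subRep (permRep k G) (LinearMap.ker φ) hkstab y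
              - LinearMap.id))
            + finrank k (LinearMap.ker (subRep (permRep k G) C hCstab y - LinearMap.id))
          = finrank k (LinearMap.ker (permRep k G y - LinearMap.id)) := by
        rw [finrank_ker_subRep, finrank_ker_subRep]
        exact ker_decomp (permRep k G) hkC hkstab hCstab y
      have hBz : finrank k (LinearMap.ker (subRep (permRep k G) (LinearMap.ker φ) hkstab z
              - LinearMap.id))
            + finrank k (LinearMap.ker (subRep (permRep k G) C hCstab z - LinearMap.id))
          = finrank k (LinearMap.ker (permRep k G z - LinearMap.id)) := by
        rw [finrank_ker_subRep, finrank_ker_subRep]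
        exact ker_decomp (permRep k G) hkC hkstab hCstab z
      have hT' : finrank k (subRep (permRep k G) (LinearMap.ker φ) hkstab).invariants
            + finrank k (subRep (permRep k G) C hCstab).invariants
          = finrank k (permRep k G).invariants := by
        rw [finrank_invariants_subRep, finrank_invariants_subRep]
        exact invariants_decomp (permRep k G) hkC hkstab hCstab
      have hdim' : finrank k (LinearMap.ker φ) + finrank k C = finrank k (G → k) :=
        Submodule.finrank_add_eq_of_isCompl hkC
      -- transfers along the equivalence e
      have hex := finrank_ker_congr _ _ e he x
      have hey := finrank_ker_congr _ _ e he y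
      have hez := finrank_ker_congr _ _ e he z
      have heT := finrank_invariants_congr _ _ e he
      have hen : finrank k C = finrank k p := e.finrank_eq
      -- regular representation numbers
      have hRx := finrank_ker_permRep_mul (k := k) x
      have hRy := finrank_ker_permRep_mul (k := k) y
      have hRz := finrank_ker_permRep_mul (k := k) z
      rw [hx, hG] at hRx
      rw [hy, hG] at hRy
      rw [hz, hG] at hRz
      have hRT : finrank k (permRep k G).invariants = 1 := finrank_invariants_permRep
      have hRdim : finrank k (G → k) = 60 := by
        rw [Module.finrank_pi, hG]
      -- Scott inequalities
      have hS1 := scott (subRep ρ p hpstab) hck x y z hxyz hgen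
      have hS2 := scott (subRep (permRep k G) (LinearMap.ker φ) hkstab) hck x y z hxyz hgen
      -- induction hypothesis applied to q
      have hp0 : finrank k p ≠ 0 := by
        intro hzero
        rw [Submodule.finrank_eq_zero] at hzero
        rw [hzero] at hvmem
        exact hv ((Submodule.mem_bot k).1 hvmem)
      have hqlt : finrank k q < n := by omega
      have hIH := ih (finrank k q) hqlt q (subRep ρ q hqstab) rfl
      omega


end Part7

section Part8
variable {G : Type*} [Group G]

lemma normal_of_index_two (H : Subgroup G) (h : H.index = 2) : H.Normal := by
  constructor
  intro n hn g
  rw [Subgroup.mul_mem_iff_of_index_two h]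
  constructor
  · intro hgn
    have hg : g ∈ H := by
      have h2 := mul_mem hgn (inv_mem hn)
      rwa [mul_assoc, mul_inv_cancel, mul_one] at h2
    exact inv_mem hg
  · intro hginv
    have hg : g ∈ H := by simpa using inv_mem hginv
    exact mul_mem hg hn

lemma card_A5 : Nat.card (alternatingGroup (Fin 5)) = 60 := by
  have h := two_mul_card_alternatingGroup (α := Fin 5)
  rw [Fintype.card_perm, Fintype.card_fin] at h
  have h5 : Nat.factorial 5 = 120 := rfl
  rw [Nat.card_eq_fintype_card]
  omega

lemma gen_top (x y z : alternatingGroup (Fin 5)) (hx : orderOf x = 2) (hy : orderOf y = 3)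
    (hz : orderOf z = 5) (hxyz : x * y * z = 1) :
    Subgroup.closure ({x, y} : Set (alternatingGroup (Fin 5))) = ⊤ := by
  set H := Subgroup.closure ({x, y} : Set (alternatingGroup (Fin 5))) with hH
  have hxH : x ∈ H := Subgroup.subset_closure (Set.mem_insert _ _)
  have hyH : y ∈ H := Subgroup.subset_closure (Set.mem_insert_of_mem _ rfl)
  have hzH : z ∈ H := by
    have hz' : z = y⁻¹ * x⁻¹ := by
      have h1 : (x * y) * z = 1 := hxyz
      have h2 : z = (x * y)⁻¹ := eq_inv_of_mul_eq_one_right h1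
      rw [h2, mul_inv_rev]
    rw [hz']
    exact mul_mem (inv_mem hyH) (inv_mem hxH)
  have h2 : 2 ∣ Nat.card H := by have := Subgroup.orderOf_dvd_natCard H hxH; rwa [hx] at this
  have h3 : 3 ∣ Nat.card H := by have := Subgroup.orderOf_dvd_natCard H hyH; rwa [hy] at this
  have h5 : 5 ∣ Nat.card H := by have := Subgroup.orderOf_dvd_natCard H hzH; rwa [hz] at this
  have h6 : 6 ∣ Nat.card H := Nat.Coprime.mul_dvd_of_dvd_of_dvd (by norm_num) h2 h3
  have h30 : 30 ∣ Nat.card H := Nat.Coprime.mul_dvd_of_dvd_of_dvd (by norm_num) h6 h5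
  have hdvd : Nat.card H ∣ 60 := card_A5 ▸ Subgroup.card_subgroup_dvd_card H
  obtain ⟨c, hc⟩ := h30
  have hc2 : c ∣ 2 := by
    have h60 : (30 : ℕ) * c ∣ 30 * 2 := by rw [← hc]; exact hdvd
    exact (mul_dvd_mul_iff_left (by norm_num : (30:ℕ) ≠ 0)).1 h60
  have hcases : Nat.card H = 30 ∨ Nat.card H = 60 := by
    rcases (Nat.dvd_prime Nat.prime_two).1 hc2 with rfl | rfl
    · left; omega
    · right; omega
  rcases hcases with h30' | h60'
  · exfalso
    have hidx : Nat.card H * H.index = 60 := by rw [Subgroup.card_mul_index, card_A5]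
    rw [h30'] at hidx
    have hidx2 : H.index = 2 := by omega
    have hnormal : H.Normal := normal_of_index_two H hidx2
    rcases hnormal.eq_bot_or_eq_top with hbot | htop
    · rw [hbot, Subgroup.card_bot] at h30'
      omega
    · rw [htop, Subgroup.card_top, card_A5] at h30'
      omega
  · exact Subgroup.eq_top_of_card_eq H (by rw [h60', card_A5])

lemma sixty_ne_zero (k : Type*) [Field k]
    (hchar : CharZero k ∨ ∃ p : ℕ, p.Prime ∧ 7 ≤ p ∧ CharP k p) : ((60 : ℕ) : k) ≠ 0 := by
  rcases hchar with h | ⟨p, hp, hp7, hcp⟩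
  · exact Nat.cast_ne_zero.2 (by norm_num)
  · intro h0
    rw [CharP.cast_eq_zero_iff k p] at h0
    have hle : p ≤ 60 := Nat.le_of_dvd (by norm_num) h0
    interval_cases p <;> revert h0 <;> revert hp <;> decide


end Part8

end SerreA5Aux

open SerreA5Aux in
/-- Serre's dimension formula (Lemma 1.3, vector space form): if `ρ` is a representation of
the alternating group `A₅` on a finite dimensional vector space `V` over an algebraically
closed field of characteristic `0` or `p ≥ 7`, and `g₂, g₃, g₅ ∈ A₅` have orders `2, 3, 5`
with `g₂g₃g₅ = 1`, then the sum of the dimensions of the fixed spaces of `ρ(g₂), ρ(g₃), ρ(g₅)`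
equals `dim V + 2 dim V^{A₅}`. -/
theorem dim_fixed_add_eq_dim_add_two_mul_dim_invariants
    (k : Type*) [Field k] [IsAlgClosed k]
    (hchar : CharZero k ∨ ∃ p : ℕ, p.Prime ∧ 7 ≤ p ∧ CharP k p)
    (V : Type*) [AddCommGroup V] [Module k V] [FiniteDimensional k V]
    (ρ : Representation k (alternatingGroup (Fin 5)) V)
    (g2 g3 g5 : alternatingGroup (Fin 5))
    (h2 : orderOf g2 = 2) (h3 : orderOf g3 = 3) (h5 : orderOf g5 = 5)
    (h235 : g2 * g3 * g5 = 1) :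
    finrank k (LinearMap.ker (ρ g2 - LinearMap.id))
      + finrank k (LinearMap.ker (ρ g3 - LinearMap.id))
      + finrank k (LinearMap.ker (ρ g5 - LinearMap.id))
      = finrank k V + 2 * finrank k ρ.invariants := by
  have hG : Fintype.card (alternatingGroup (Fin 5)) = 60 := by
    rw [← Nat.card_eq_fintype_card]
    exact card_A5
  have hck : ((Fintype.card (alternatingGroup (Fin 5)) : ℕ) : k) ≠ 0 := by
    rw [hG]
    exact sixty_ne_zero k hchar
  have hgen := gen_top g2 g3 g5 h2 h3 h5 h235
  exact master_aux hck hG g2 g3 g5 h2 h3 h5 h235 hgen (finrank k V) V ρ rfl
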